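/- Let T ∈ 𝒫₁(ℓ_2). If T is a point of continuity of the identity map from (𝒫₁(ℓ_2), SOT) to (𝒫₁(ℓ_2), SOT*), or of the identity map from (𝒫₁(ℓ_2), WOT) to (𝒫₁(ℓ_2), SOT), or of the identity map from (𝒫₁(ℓ_2), WOT) to (𝒫₁(ℓ_2), SOT_*), then ‖T‖ = 1. -/

import Mathlib

open scoped ENNReal

noncomputable section

/-- The Hilbert space `ℓ₂` of square-summable complex sequences. -/
abbrev L2 := lp (fun _ : ℕ => ℂ) 2

/-- A vector of `ℓ₂` is positive if all its coordinates are nonnegative reals. -/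
def PosVec (x : L2) : Prop := ∀ n : ℕ, 0 ≤ (x n).re ∧ (x n).im = 0

/-- The set `𝒫₁(ℓ₂)` of positive contractions on `ℓ₂`. -/
def P1 : Set (L2 →L[ℂ] L2) :=
  {T | (∀ x : L2, PosVec x → PosVec (T x)) ∧ ‖T‖ ≤ 1}

/-- The strong operator topology (pointwise norm-convergence). -/
def sot : TopologicalSpace (L2 →L[ℂ] L2) :=
  TopologicalSpace.induced (fun T => (fun x : L2 => T x)) Pi.topologicalSpace

/-- The weak operator topology (pointwise weak convergence). -/
def wot : TopologicalSpace (L2 →L[ℂ] L2) :=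
  TopologicalSpace.induced
    (fun T => (fun q : L2 × L2 => (inner ℂ q.1 (T q.2) : ℂ)))
    Pi.topologicalSpace

/-- The dual strong operator topology `SOT_*` (pointwise norm-convergence of the adjoints). -/
def sotStar : TopologicalSpace (L2 →L[ℂ] L2) :=
  TopologicalSpace.induced
    (fun T => (fun x : L2 => (ContinuousLinearMap.adjoint T) x))
    Pi.topologicalSpace

/-- The `SOT*` topology, the join of `SOT` and `SOT_*`.  (In the order on
`TopologicalSpace`, `⊓` is the coarsest topology refining both.) -/
def sotSStar : TopologicalSpace (L2 →L[ℂ] L2) := sot ⊓ sotStar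

/-- Restriction of a topology to a subset. -/
def rtop {α : Type*} (s : Set α) (t : TopologicalSpace α) : TopologicalSpace ↥s :=
  t.induced Subtype.val

/-- Two topologies on the same set are similar if they have the same dense sets. -/
def SimilarTop {Y : Type*} (t t' : TopologicalSpace Y) : Prop :=
  ∀ A : Set Y, @Dense Y t A ↔ @Dense Y t' A

section Aux
open Filter Topology ContinuousLinearMap

def ket (n : ℕ) : L2 := lp.single 2 n 1

def rk (m n : ℕ) : L2 →L[ℂ] L2 := (innerSL ℂ (ket n)).smulRight (ket m)

lemma inner_ket_left (n : ℕ) (x : L2) : (inner ℂ (ket n) x : ℂ) = x n := by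
  rw [ket, lp.inner_single_left]; simp [RCLike.inner_apply]

lemma inner_ket_right (n : ℕ) (x : L2) : (inner ℂ x (ket n) : ℂ) = (starRingEnd ℂ) (x n) := by
  rw [ket, lp.inner_single_right]; simp [RCLike.inner_apply]

lemma rk_apply (m n : ℕ) (x : L2) : rk m n x = x n • ket m := by
  simp [rk, ContinuousLinearMap.smulRight_apply, innerSL_apply_apply, inner_ket_left]

lemma ket_apply (n j : ℕ) : (ket n) j = if j = n then 1 else 0 := by
  rcases eq_or_ne j n with h | h
  · subst h; simp [ket, lp.single_apply_self]
  · simp [ket, lp.single_apply_ne _ _ _ h, h]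

lemma norm_ket (n : ℕ) : ‖ket n‖ = 1 := by
  have := lp.norm_single (p := (2:ℝ≥0∞)) (E := fun _ : ℕ => ℂ) (by norm_num) n (1 : ℂ)
  simpa [ket] using this

lemma rk_norm (m n : ℕ) : ‖rk m n‖ = 1 := by
  rw [rk, ContinuousLinearMap.norm_smulRight_apply, innerSL_apply_norm, norm_ket, norm_ket]
  norm_num

lemma coord_tendsto (x : L2) : Tendsto (fun n => x n) atTop (𝓝 0) := by
  have hm : Memℓp (fun n => x n) 2 := lp.memℓp x
  rw [memℓp_gen_iff (by norm_num)] at hm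
  have h2 := hm.tendsto_atTop_zero
  rw [tendsto_zero_iff_norm_tendsto_zero]
  have : Tendsto (fun n => Real.sqrt (‖x n‖ ^ (2:ℝ≥0∞).toReal)) atTop (𝓝 (Real.sqrt 0)) := h2.sqrt
  simpa [Real.sqrt_eq_zero', ENNReal.toReal_ofNat,
    Real.rpow_natCast, Real.sqrt_sq (norm_nonneg _)] using this

lemma rk_adjoint_smul (c : ℝ) (m n : ℕ) :
    ContinuousLinearMap.adjoint ((c : ℂ) • rk m n) = (c : ℂ) • rk n m := by
  symm
  rw [ContinuousLinearMap.eq_adjoint_iff]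
  intro x y
  simp only [ContinuousLinearMap.smul_apply, rk_apply, inner_smul_left, inner_smul_right,
    inner_smul_left, inner_ket_left, inner_ket_right, Complex.conj_ofReal, map_mul,
    RingHomCompTriple.comp_apply, RCLike.conj_conj]
  ring

lemma adjoint_perturb (A : L2 →L[ℂ] L2) (c : ℝ) (m n : ℕ) :
    ContinuousLinearMap.adjoint (A + (c : ℂ) • rk m n) =
      ContinuousLinearMap.adjoint A + (c : ℂ) • rk n m := by
  rw [map_add, rk_adjoint_smul]

lemma memP1_perturb {A : L2 →L[ℂ] L2} (hA : A ∈ P1) {c : ℝ} (hc : 0 ≤ c)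
    (hsum : ‖A‖ + c ≤ 1) (m n : ℕ) : A + (c : ℂ) • rk m n ∈ P1 := by
  constructor
  · intro x hx j
    have h1 := hA.1 x hx j
    have hxn := hx n
    have key : ((A + (c : ℂ) • rk m n) x) j
        = (A x) j + (c : ℂ) * (x n * (if j = m then 1 else 0)) := by
      rw [ContinuousLinearMap.add_apply, ContinuousLinearMap.smul_apply, rk_apply]
      rw [lp.coeFn_add]
      simp [lp.coeFn_smul, ket_apply, smul_eq_mul, mul_assoc, -Complex.coe_smul]
    rcases eq_or_ne j m with hj | hj
    · subst hj
      rw [key, if_pos rfl, mul_one]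
      constructor
      · simp only [Complex.add_re, Complex.mul_re,
          Complex.ofReal_re, Complex.ofReal_im, hxn.2, zero_mul, mul_zero, sub_zero]
        have := add_nonneg h1.1 (mul_nonneg hc hxn.1)
        linarith
      · simp [Complex.add_im, Complex.mul_im, Complex.ofReal_im, Complex.ofReal_re,
          hxn.2, h1.2]
    · rw [key]
      simp [hj, h1.1, h1.2]
  · calc ‖A + (c : ℂ) • rk m n‖ ≤ ‖A‖ + ‖(c : ℂ) • rk m n‖ := norm_add_le _ _
      _ = ‖A‖ + c := by
          rw [norm_smul ((c : ℝ) : ℂ) (rk m n), rk_norm, mul_one, Complex.norm_real, Real.norm_eq_abs,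
            abs_of_nonneg hc]
      _ ≤ 1 := hsum

lemma not_tendsto_perturb {c : ℝ} (hc : 0 < c) (v : L2) :
    ¬ Tendsto (fun k => v + (c : ℂ) • ket k) atTop (𝓝 v) := by
  intro h
  have h2 : Tendsto (fun k => ‖(v + (c : ℂ) • ket k) - v‖) atTop (𝓝 0) := by
    have := (h.sub_const v).norm
    simpa using this
  have h3 : (fun k => ‖(v + (c : ℂ) • ket k) - v‖) = fun _ => c := by
    funext k
    simp [norm_smul, norm_ket, Complex.norm_real, Real.norm_eq_abs, abs_of_pos hc, -Complex.coe_smul]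
  rw [h3] at h2
  have : c = 0 := tendsto_nhds_unique tendsto_const_nhds h2
  linarith

lemma sot_tendsto_iff (u : ℕ → ↥P1) (T : ↥P1) :
    Tendsto u atTop (@nhds _ (rtop P1 sot) T) ↔
      ∀ x : L2, Tendsto (fun k => (u k : L2 →L[ℂ] L2) x) atTop
        (𝓝 ((T : L2 →L[ℂ] L2) x)) := by
  rw [rtop, sot, induced_compose, nhds_induced, Filter.tendsto_comap_iff]
  rw [tendsto_pi_nhds]
  rfl

lemma sotStar_tendsto_iff (u : ℕ → ↥P1) (T : ↥P1) :
    Tendsto u atTop (@nhds _ (rtop P1 sotStar) T) ↔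
      ∀ x : L2, Tendsto
        (fun k => ContinuousLinearMap.adjoint (u k : L2 →L[ℂ] L2) x) atTop
        (𝓝 (ContinuousLinearMap.adjoint (T : L2 →L[ℂ] L2) x)) := by
  rw [rtop, sotStar, induced_compose, nhds_induced, Filter.tendsto_comap_iff]
  rw [tendsto_pi_nhds]
  rfl

lemma wot_tendsto_iff (u : ℕ → ↥P1) (T : ↥P1) :
    Tendsto u atTop (@nhds _ (rtop P1 wot) T) ↔
      ∀ q : L2 × L2, Tendsto
        (fun k => (inner ℂ q.1 ((u k : L2 →L[ℂ] L2) q.2) : ℂ)) atTop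
        (𝓝 (inner ℂ q.1 ((T : L2 →L[ℂ] L2) q.2) : ℂ)) := by
  rw [rtop, wot, induced_compose, nhds_induced, Filter.tendsto_comap_iff]
  rw [tendsto_pi_nhds]
  rfl

lemma sotSStar_le_sotStar (u : ℕ → ↥P1) (T : ↥P1)
    (h : Tendsto u atTop (@nhds _ (rtop P1 sotSStar) T)) :
    Tendsto u atTop (@nhds _ (rtop P1 sotStar) T) :=
  h.mono_right (nhds_mono (induced_mono inf_le_right))

end Aux

open Filter Topology

set_option maxHeartbeats 1000000 in
set_option synthInstance.maxHeartbeats 100000 in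
/-- Let `T ∈ 𝒫₁(ℓ₂)`.  If `T` is a point of continuity of the identity
map from `(𝒫₁(ℓ₂), SOT)` to `(𝒫₁(ℓ₂), SOT*)`, or from `(𝒫₁(ℓ₂), WOT)` to
`(𝒫₁(ℓ₂), SOT)`, or from `(𝒫₁(ℓ₂), WOT)` to `(𝒫₁(ℓ₂), SOT_*)`, then `‖T‖ = 1`. -/
theorem continuity_point_has_norm_one (T : ↥P1)
    (h : @ContinuousAt ↥P1 ↥P1 (rtop P1 sot) (rtop P1 sotSStar) id T ∨
         @ContinuousAt ↥P1 ↥P1 (rtop P1 wot) (rtop P1 sot) id T ∨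
         @ContinuousAt ↥P1 ↥P1 (rtop P1 wot) (rtop P1 sotStar) id T) :
    ‖(T : L2 →L[ℂ] L2)‖ = 1 := by
  by_contra hne
  have hle : ‖(T : L2 →L[ℂ] L2)‖ ≤ 1 := T.2.2
  have hlt : ‖(T : L2 →L[ℂ] L2)‖ < 1 := lt_of_le_of_ne hle hne
  set c : ℝ := 1 - ‖(T : L2 →L[ℂ] L2)‖ with hcdef
  have hc : (0 : ℝ) < c := by rw [hcdef]; linarith
  have hsum : ‖(T : L2 →L[ℂ] L2)‖ + c ≤ 1 := by rw [hcdef]; linarith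
  rcases h with h1 | h2 | h3
  · -- SOT → SOT*
    set u : ℕ → ↥P1 := fun k =>
      ⟨(T : L2 →L[ℂ] L2) + (c : ℂ) • rk 0 k, memP1_perturb T.2 hc.le hsum 0 k⟩ with hu_def
    have hu : Tendsto u atTop (@nhds _ (rtop P1 sot) T) := by
      rw [sot_tendsto_iff]
      intro x
      have h0 : Tendsto (fun k => (c : ℂ) • ((x k : ℂ) • ket 0)) atTop (𝓝 0) := by
        simpa using (((coord_tendsto x).smul_const (ket 0)).const_smul ((c : ℝ) : ℂ))
      have heq : ∀ k, (u k : L2 →L[ℂ] L2) x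
          = (T : L2 →L[ℂ] L2) x + (c : ℂ) • ((x k : ℂ) • ket 0) := by
        intro k
        show ((T : L2 →L[ℂ] L2) + (c : ℂ) • rk 0 k) x = _
        rw [ContinuousLinearMap.add_apply, ContinuousLinearMap.smul_apply, rk_apply]
      simp only [heq]
      simpa using (tendsto_const_nhds (x := (T : L2 →L[ℂ] L2) x) (f := atTop)).add h0
    have h1' : Tendsto id (@nhds _ (rtop P1 sot) T) (@nhds _ (rtop P1 sotSStar) T) := h1
    have hfine : Tendsto u atTop (@nhds _ (rtop P1 sotSStar) T) := by
      have h' := h1'.comp hu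
      rwa [Function.id_comp] at h'
    have hstar := (sotStar_tendsto_iff u T).mp (sotSStar_le_sotStar u T hfine) (ket 0)
    have heq : ∀ k, ContinuousLinearMap.adjoint (u k : L2 →L[ℂ] L2) (ket 0)
        = ContinuousLinearMap.adjoint (T : L2 →L[ℂ] L2) (ket 0) + (c : ℂ) • ket k := by
      intro k
      show ContinuousLinearMap.adjoint ((T : L2 →L[ℂ] L2) + (c : ℂ) • rk 0 k) (ket 0) = _
      rw [adjoint_perturb, ContinuousLinearMap.add_apply, ContinuousLinearMap.smul_apply,
        rk_apply]
      simp [ket_apply]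
    simp only [heq] at hstar
    exact not_tendsto_perturb hc _ hstar
  · -- WOT → SOT
    set u : ℕ → ↥P1 := fun k =>
      ⟨(T : L2 →L[ℂ] L2) + (c : ℂ) • rk k 0, memP1_perturb T.2 hc.le hsum k 0⟩ with hu_def
    have hu : Tendsto u atTop (@nhds _ (rtop P1 wot) T) := by
      rw [wot_tendsto_iff]
      rintro ⟨y, x⟩
      have hconj : Tendsto (fun k => (starRingEnd ℂ) (y k)) atTop (𝓝 0) := by
        rw [tendsto_zero_iff_norm_tendsto_zero]
        simpa using tendsto_zero_iff_norm_tendsto_zero.mp (coord_tendsto y)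
      have hterm : Tendsto
          (fun k => (c : ℂ) * ((x 0 : ℂ) * (starRingEnd ℂ) (y k))) atTop (𝓝 0) := by
        simpa using (hconj.const_mul ((x 0 : ℂ))).const_mul ((c : ℝ) : ℂ)
      have heq : ∀ k, (inner ℂ y ((u k : L2 →L[ℂ] L2) x) : ℂ)
          = (inner ℂ y ((T : L2 →L[ℂ] L2) x) : ℂ)
            + (c : ℂ) * ((x 0 : ℂ) * (starRingEnd ℂ) (y k)) := by
        intro k
        show (inner ℂ y (((T : L2 →L[ℂ] L2) + (c : ℂ) • rk k 0) x) : ℂ) = _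
        rw [ContinuousLinearMap.add_apply, ContinuousLinearMap.smul_apply, rk_apply,
          inner_add_right, inner_smul_right, inner_smul_right, inner_ket_right]
      simp only [heq]
      simpa using (tendsto_const_nhds
        (x := (inner ℂ y ((T : L2 →L[ℂ] L2) x) : ℂ)) (f := atTop)).add hterm
    have h2' : Tendsto id (@nhds _ (rtop P1 wot) T) (@nhds _ (rtop P1 sot) T) := h2
    have hfine : Tendsto u atTop (@nhds _ (rtop P1 sot) T) := by
      have h' := h2'.comp hu
      rwa [Function.id_comp] at h'
    have hsotp := (sot_tendsto_iff u T).mp hfine (ket 0)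
    have heq : ∀ k, (u k : L2 →L[ℂ] L2) (ket 0)
        = (T : L2 →L[ℂ] L2) (ket 0) + (c : ℂ) • ket k := by
      intro k
      show ((T : L2 →L[ℂ] L2) + (c : ℂ) • rk k 0) (ket 0) = _
      rw [ContinuousLinearMap.add_apply, ContinuousLinearMap.smul_apply, rk_apply]
      simp [ket_apply]
    simp only [heq] at hsotp
    exact not_tendsto_perturb hc _ hsotp
  · -- WOT → SOT_*
    set u : ℕ → ↥P1 := fun k =>
      ⟨(T : L2 →L[ℂ] L2) + (c : ℂ) • rk 0 k, memP1_perturb T.2 hc.le hsum 0 k⟩ with hu_def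
    have hu : Tendsto u atTop (@nhds _ (rtop P1 wot) T) := by
      rw [wot_tendsto_iff]
      rintro ⟨y, x⟩
      have hterm : Tendsto
          (fun k => (c : ℂ) * ((x k : ℂ) * (inner ℂ y (ket 0) : ℂ))) atTop (𝓝 0) := by
        simpa using ((coord_tendsto x).mul_const ((inner ℂ y (ket 0) : ℂ))).const_mul
          ((c : ℝ) : ℂ)
      have heq : ∀ k, (inner ℂ y ((u k : L2 →L[ℂ] L2) x) : ℂ)
          = (inner ℂ y ((T : L2 →L[ℂ] L2) x) : ℂ)
            + (c : ℂ) * ((x k : ℂ) * (inner ℂ y (ket 0) : ℂ)) := by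
        intro k
        show (inner ℂ y (((T : L2 →L[ℂ] L2) + (c : ℂ) • rk 0 k) x) : ℂ) = _
        rw [ContinuousLinearMap.add_apply, ContinuousLinearMap.smul_apply, rk_apply,
          inner_add_right, inner_smul_right, inner_smul_right]
      simp only [heq]
      simpa using (tendsto_const_nhds
        (x := (inner ℂ y ((T : L2 →L[ℂ] L2) x) : ℂ)) (f := atTop)).add hterm
    have h3' : Tendsto id (@nhds _ (rtop P1 wot) T) (@nhds _ (rtop P1 sotStar) T) := h3
    have hfine : Tendsto u atTop (@nhds _ (rtop P1 sotStar) T) := by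
      have h' := h3'.comp hu
      rwa [Function.id_comp] at h'
    have hstar := (sotStar_tendsto_iff u T).mp hfine (ket 0)
    have heq : ∀ k, ContinuousLinearMap.adjoint (u k : L2 →L[ℂ] L2) (ket 0)
        = ContinuousLinearMap.adjoint (T : L2 →L[ℂ] L2) (ket 0) + (c : ℂ) • ket k := by
      intro k
      show ContinuousLinearMap.adjoint ((T : L2 →L[ℂ] L2) + (c : ℂ) • rk 0 k) (ket 0) = _
      rw [adjoint_perturb, ContinuousLinearMap.add_apply, ContinuousLinearMap.smul_apply,
        rk_apply]
      simp [ket_apply]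
    simp only [heq] at hstar
    exact not_tendsto_perturb hc _ hstar
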